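/- Let ρ = (√5−1)/2 and let λ : (ρ, 1) → (0, 1) be a continuous, nonincreasing function satisfying (1/(1−r) − r/(2+2r+2r²))^{−1} ≤ λ(r) ≤ 2/(2+r) for all r ∈ (ρ, 1). Then there exists a unique r ∈ (ρ, 1) such that λ(r) = r². -/

import Mathlib

theorem stmt_8 (ρ : ℝ) (hρ : ρ = (Real.sqrt 5 - 1) / 2)
    (lam : ℝ → ℝ)
    (hcont : ContinuousOn lam (Set.Ioo ρ 1))
    (hmono : ∀ r₁ ∈ Set.Ioo ρ 1, ∀ r₂ ∈ Set.Ioo ρ 1, r₁ ≤ r₂ → lam r₂ ≤ lam r₁)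
    (hrange : ∀ r ∈ Set.Ioo ρ 1, 0 < lam r ∧ lam r < 1)
    (hbound : ∀ r ∈ Set.Ioo ρ 1,
      (1 / (1 - r) - r / (2 + 2 * r + 2 * r ^ 2))⁻¹ ≤ lam r ∧ lam r ≤ 2 / (2 + r)) :
    ∃! r : ℝ, r ∈ Set.Ioo ρ 1 ∧ lam r = r ^ 2 := by
  have hs5 : Real.sqrt 5 < 2.24 := by
    have h : (0:ℝ) ≤ 5 := by norm_num
    nlinarith [Real.sq_sqrt h, Real.sqrt_nonneg (5:ℝ)]
  have hρpos : 0 < ρ := by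
    have : 2 < Real.sqrt 5 := by
      have : Real.sqrt 4 < Real.sqrt 5 := Real.sqrt_lt_sqrt (by norm_num) (by norm_num)
      simpa [Real.sqrt_eq_iff_eq_sq, show Real.sqrt 4 = 2 by
        rw [show (4:ℝ) = 2^2 by norm_num]; exact Real.sqrt_sq (by norm_num)] using this
    rw [hρ]; linarith
  have hρlt : ρ < 31/50 := by rw [hρ]; nlinarith
  have haI : (31/50 : ℝ) ∈ Set.Ioo ρ 1 := ⟨hρlt, by norm_num⟩
  have hbI : (19/20 : ℝ) ∈ Set.Ioo ρ 1 := ⟨lt_trans hρlt (by norm_num), by norm_num⟩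
  have hsub : Set.Icc (31/50 : ℝ) (19/20) ⊆ Set.Ioo ρ 1 := fun x hx =>
    ⟨lt_of_lt_of_le hρlt hx.1, lt_of_le_of_lt hx.2 (by norm_num)⟩
  -- sign at a = 31/50 : lam a > a²
  have hga : (31/50 : ℝ)^2 < lam (31/50) := by
    have h1 := (hbound _ haI).1
    have h2 : ((31:ℝ)/50)^2 < (1 / (1 - 31/50) - (31/50) / (2 + 2 * (31/50) + 2 * (31/50) ^ 2))⁻¹ := by
      norm_num
    linarith
  -- sign at b = 19/20 : lam b < b²
  have hgb : lam (19/20) < (19/20 : ℝ)^2 := by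
    have h1 := (hbound _ hbI).2
    have h2 : (2 : ℝ) / (2 + 19/20) < (19/20)^2 := by norm_num
    linarith
  -- IVT for g r = lam r - r²
  set g : ℝ → ℝ := fun r => lam r - r^2 with hg
  have hgcont : ContinuousOn g (Set.Icc (31/50 : ℝ) (19/20)) :=
    (hcont.mono hsub).sub (continuous_pow 2).continuousOn
  have hmem : (0:ℝ) ∈ Set.Icc (g (19/20)) (g (31/50)) := by
    constructor <;> simp only [hg] <;> linarith
  obtain ⟨c, hc, hgc⟩ := intermediate_value_Icc' (by norm_num : (31/50:ℝ) ≤ 19/20) hgcont hmem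
  have hcI : c ∈ Set.Ioo ρ 1 := hsub hc
  have hceq : lam c = c^2 := by
    have : lam c - c^2 = 0 := hgc
    linarith
  refine ⟨c, ⟨hcI, hceq⟩, ?_⟩
  rintro y ⟨hyI, hyeq⟩
  by_contra hne
  rcases lt_or_gt_of_ne hne with h | h
  · have h1 := hmono y hyI c hcI h.le
    have hy0 : 0 < y := lt_trans hρpos hyI.1
    nlinarith
  · have h1 := hmono c hcI y hyI h.le
    have hc0 : 0 < c := lt_trans hρpos hcI.1
    nlinarith
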